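/- Let X be a real Banach space, n a positive integer, and f_1,…,f_n : 𝒞_n → X. Then, averaging over all permutations π of {1,…,n}, one has the identity (1/n!) Σ_{π ∈ S_n} Σ_{i=1}^n 𝔈_i^π ∂_{π(i)} f_{π(i)} = Σ_{i=1}^n Δ^{−1}∂_i f_i. -/

import Mathlib

noncomputable section

open Finset

/-- The sign `±1` attached to a boolean coordinate of the discrete cube. -/
def sgn (b : Bool) : ℝ := if b then 1 else -1

variable {X : Type*} [NormedAddCommGroup X] [NormedSpace ℝ X]

/-- `L_p` norm of `f : 𝒞_n → X` with respect to the uniform probability measure. -/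
def cubeLpNorm (n : ℕ) (p : ℝ) (f : (Fin n → Bool) → X) : ℝ :=
  (((2 : ℝ) ^ n)⁻¹ * ∑ ε : Fin n → Bool, ‖f ε‖ ^ p) ^ (1 / p)

/-- Conditional expectation given the coordinates in `S`: average of `f η` over all
`η` agreeing with `ε` on `S`. -/
def cubeCondExp (n : ℕ) (S : Finset (Fin n)) (f : (Fin n → Bool) → X) :
    (Fin n → Bool) → X := fun ε =>
  ((2 : ℝ) ^ (n - S.card))⁻¹ •
    ∑ η ∈ univ.filter (fun η : Fin n → Bool => ∀ j ∈ S, η j = ε j), f η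

/-- The set of the first `i` coordinates (`0`-based). -/
def firstIdx (n i : ℕ) : Finset (Fin n) := univ.filter fun j => (j : ℕ) < i

/-- `𝔈_i`: conditioning on the first `i` coordinates. -/
def Ei (n i : ℕ) (f : (Fin n → Bool) → X) : (Fin n → Bool) → X :=
  cubeCondExp n (firstIdx n i) f

/-- `𝔈_i^π`: conditioning on the coordinates `π(1),…,π(i)`. -/
def Epi (n : ℕ) (π : Equiv.Perm (Fin n)) (i : ℕ) (f : (Fin n → Bool) → X) :
    (Fin n → Bool) → X :=
  cubeCondExp n ((firstIdx n i).image π) f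

/-- `∂_i`: the `i`-th discrete partial derivative. -/
def cubeDeriv (n : ℕ) (i : Fin n) (f : (Fin n → Bool) → X) : (Fin n → Bool) → X :=
  fun ε => (2 : ℝ)⁻¹ • (f ε - f (Function.update ε i (!(ε i))))

/-- `X` satisfies the hypercube Stein inequality with constant `s` for exponent `p`. -/
def SteinIneq (X : Type*) [NormedAddCommGroup X] [NormedSpace ℝ X] (p s : ℝ) : Prop :=
  ∀ m : ℕ, 0 < m → ∀ (π : Equiv.Perm (Fin m)) (g : Fin m → (Fin m → Bool) → X),
    (((2 : ℝ) ^ m)⁻¹ * ∑ δ : Fin m → Bool,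
        (cubeLpNorm m p fun ε => ∑ i : Fin m, sgn (δ i) • Epi m π ((i : ℕ) + 1) (g i) ε) ^ p) ^ (1 / p)
      ≤ s * (((2 : ℝ) ^ m)⁻¹ * ∑ δ : Fin m → Bool,
        (cubeLpNorm m p fun ε => ∑ i : Fin m, sgn (δ i) • g i ε) ^ p) ^ (1 / p)

/-- `X` satisfies the hypercube UMD⁻ inequality with constant `b` for exponent `p`. -/
def UMDminusIneq (X : Type*) [NormedAddCommGroup X] [NormedSpace ℝ X] (p b : ℝ) : Prop :=
  ∀ m : ℕ, 0 < m → ∀ (π : Equiv.Perm (Fin m)) (d : Fin m → (Fin m → Bool) → X),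
    (∀ i : Fin m, Epi m π ((i : ℕ) + 1) (d i) = d i ∧ Epi m π (i : ℕ) (d i) = 0) →
    cubeLpNorm m p (fun ε => ∑ i : Fin m, d i ε)
      ≤ b * (((2 : ℝ) ^ m)⁻¹ * ∑ δ : Fin m → Bool,
        (cubeLpNorm m p fun ε => ∑ i : Fin m, sgn (δ i) • d i ε) ^ p) ^ (1 / p)

/-- The Walsh function `w_A`. -/
def walsh (n : ℕ) (A : Finset (Fin n)) (ε : Fin n → Bool) : ℝ := ∏ i ∈ A, sgn (ε i)

/-- The Walsh coefficient `f̂(A)`. -/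
def walshCoeff (n : ℕ) (f : (Fin n → Bool) → X) (A : Finset (Fin n)) : X :=
  ((2 : ℝ) ^ n)⁻¹ • ∑ ε : Fin n → Bool, walsh n A ε • f ε

/-- `Δ⁻¹∂_i f = Σ_{A ∋ i} |A|⁻¹ f̂(A) w_A`. -/
def invLapDeriv (n : ℕ) (i : Fin n) (f : (Fin n → Bool) → X) : (Fin n → Bool) → X :=
  fun ε => ∑ A ∈ univ.filter (fun A : Finset (Fin n) => i ∈ A),
    ((A.card : ℝ)⁻¹ * walsh n A ε) • walshCoeff n f A

lemma sgn_not (b : Bool) : sgn (!b) = -sgn b := by cases b <;> simp [sgn]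

lemma walsh_orth (n : ℕ) (ε η : Fin n → Bool) :
    ∑ A : Finset (Fin n), walsh n A ε * walsh n A η = if ε = η then (2:ℝ)^n else 0 := by
  calc ∑ A : Finset (Fin n), walsh n A ε * walsh n A η
      = ∑ A ∈ (univ : Finset (Fin n)).powerset,
          (∏ i ∈ A, (sgn (ε i) * sgn (η i))) * ∏ i ∈ univ \ A, (1:ℝ) := by
        rw [Finset.powerset_univ]
        refine Finset.sum_congr rfl fun A _ => ?_
        rw [walsh, walsh, ← Finset.prod_mul_distrib, Finset.prod_const_one, mul_one]
    _ = ∏ i : Fin n, (sgn (ε i) * sgn (η i) + 1) := (Finset.prod_add _ _ _).symm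
    _ = ∏ i : Fin n, (if ε i = η i then (2:ℝ) else 0) := by
        refine Finset.prod_congr rfl fun i _ => ?_
        cases hε : ε i <;> cases hη : η i <;> norm_num [sgn]
    _ = if ε = η then (2:ℝ)^n else 0 := by
        by_cases hεη : ε = η
        · subst hεη
          simp [Finset.prod_const, Finset.card_univ]
        · rw [if_neg hεη]
          obtain ⟨i, hi⟩ := Function.ne_iff.mp hεη
          exact Finset.prod_eq_zero (Finset.mem_univ i) (if_neg hi)

lemma walsh_expand (n : ℕ) (f : (Fin n → Bool) → X) (ε : Fin n → Bool) :
    ∑ A : Finset (Fin n), walsh n A ε • walshCoeff n f A = f ε := by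
  have step : ∀ A : Finset (Fin n), walsh n A ε • walshCoeff n f A
      = ((2:ℝ)^n)⁻¹ • ∑ η : Fin n → Bool, (walsh n A ε * walsh n A η) • f η := by
    intro A
    rw [walshCoeff, smul_comm, Finset.smul_sum]
    congr 1
    refine Finset.sum_congr rfl fun η _ => ?_
    rw [smul_smul]
  calc ∑ A : Finset (Fin n), walsh n A ε • walshCoeff n f A
      = ((2:ℝ)^n)⁻¹ • ∑ A : Finset (Fin n), ∑ η : Fin n → Bool,
          (walsh n A ε * walsh n A η) • f η := by
        rw [Finset.smul_sum]; exact Finset.sum_congr rfl fun A _ => step A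
    _ = ((2:ℝ)^n)⁻¹ • ∑ η : Fin n → Bool,
          (∑ A : Finset (Fin n), walsh n A ε * walsh n A η) • f η := by
        rw [Finset.sum_comm]
        congr 1
        exact Finset.sum_congr rfl fun η _ => (Finset.sum_smul).symm
    _ = ((2:ℝ)^n)⁻¹ • ∑ η : Fin n → Bool,
          (if ε = η then (2:ℝ)^n else 0) • f η := by
        congr 1; exact Finset.sum_congr rfl fun η _ => by rw [walsh_orth]
    _ = f ε := by
        simp [ite_smul, Finset.sum_ite_eq, smul_smul,
          inv_mul_cancel₀ (by positivity : ((2:ℝ)^n) ≠ 0)]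

lemma sum_walsh_filter (n : ℕ) (S A : Finset (Fin n)) (ε : Fin n → Bool) :
    ∑ η ∈ univ.filter (fun η : Fin n → Bool => ∀ j ∈ S, η j = ε j), walsh n A η
      = if A ⊆ S then (2:ℝ)^(n - S.card) * walsh n A ε else 0 := by
  classical
  set g : Fin n → Bool → ℝ := fun i b =>
    (if i ∈ S then (if b = ε i then 1 else 0) else 1) * (if i ∈ A then sgn b else 1) with hg
  have hprod : ∀ η : Fin n → Bool, ∏ i : Fin n, g i (η i)
      = (if (∀ j ∈ S, η j = ε j) then 1 else 0) * walsh n A η := by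
    intro η
    rw [hg, Finset.prod_mul_distrib]
    congr 1
    · rw [Finset.prod_ite_mem, Finset.univ_inter, Finset.prod_boole]
      congr 1
    · rw [Finset.prod_ite_mem, Finset.univ_inter, walsh]
  have hswap : ∑ η : Fin n → Bool, ∏ i : Fin n, g i (η i)
      = ∏ i : Fin n, ∑ b : Bool, g i b := by
    rw [Finset.prod_univ_sum]
    apply Finset.sum_nbij' (fun x => x) (fun x => x) <;> simp
  have hlhs : ∑ η ∈ univ.filter (fun η : Fin n → Bool => ∀ j ∈ S, η j = ε j), walsh n A η
      = ∑ η : Fin n → Bool, ∏ i : Fin n, g i (η i) := by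
    rw [Finset.sum_filter]
    refine Finset.sum_congr rfl fun η _ => ?_
    rw [hprod, ite_mul, one_mul, zero_mul]
  have hsi : ∀ i : Fin n, ∑ b : Bool, g i b
      = if i ∈ S then (if i ∈ A then sgn (ε i) else 1) else (if i ∈ A then 0 else 2) := by
    intro i
    rw [Fintype.sum_bool, hg]
    by_cases hiS : i ∈ S <;> by_cases hiA : i ∈ A <;> cases hε : ε i <;>
      simp [hiS, hiA, hε, sgn] <;> norm_num
  rw [hlhs, hswap]
  by_cases hAS : A ⊆ S
  · rw [if_pos hAS, ← Finset.prod_mul_prod_compl S]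
    have h1 : ∏ i ∈ S, ∑ b : Bool, g i b = walsh n A ε := by
      rw [show ∏ i ∈ S, ∑ b : Bool, g i b
            = ∏ i ∈ S, (if i ∈ A then sgn (ε i) else 1) from
          Finset.prod_congr rfl fun i hi => by rw [hsi, if_pos hi]]
      rw [Finset.prod_ite_mem, Finset.inter_eq_right.mpr hAS, walsh]
    have h2 : ∏ i ∈ Sᶜ, ∑ b : Bool, g i b = (2:ℝ)^(n - S.card) := by
      rw [show ∏ i ∈ Sᶜ, ∑ b : Bool, g i b = ∏ _i ∈ Sᶜ, (2:ℝ) from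
          Finset.prod_congr rfl fun i hi => by
            have hiS : i ∉ S := Finset.mem_compl.mp hi
            rw [hsi, if_neg hiS, if_neg (fun hiA => hiS (hAS hiA))]]
      rw [Finset.prod_const, Finset.card_compl, Fintype.card_fin]
    rw [h1, h2, mul_comm]
  · rw [if_neg hAS]
    obtain ⟨i, hiA, hiS⟩ := Finset.not_subset.mp hAS
    refine Finset.prod_eq_zero (Finset.mem_univ i) ?_
    rw [hsi, if_neg hiS, if_pos hiA]

lemma condExp_eq (n : ℕ) (S : Finset (Fin n)) (f : (Fin n → Bool) → X) (ε : Fin n → Bool) :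
    cubeCondExp n S f ε
      = ∑ A : Finset (Fin n), (if A ⊆ S then walsh n A ε else 0) • walshCoeff n f A := by
  rw [cubeCondExp]
  have h1 : ∑ η ∈ univ.filter (fun η : Fin n → Bool => ∀ j ∈ S, η j = ε j), f η
      = ∑ A : Finset (Fin n),
          (∑ η ∈ univ.filter (fun η : Fin n → Bool => ∀ j ∈ S, η j = ε j), walsh n A η)
            • walshCoeff n f A := by
    calc ∑ η ∈ univ.filter (fun η : Fin n → Bool => ∀ j ∈ S, η j = ε j), f η
        = ∑ η ∈ univ.filter (fun η : Fin n → Bool => ∀ j ∈ S, η j = ε j),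
            ∑ A : Finset (Fin n), walsh n A η • walshCoeff n f A :=
          Finset.sum_congr rfl fun η _ => (walsh_expand n f η).symm
      _ = ∑ A : Finset (Fin n),
            ∑ η ∈ univ.filter (fun η : Fin n → Bool => ∀ j ∈ S, η j = ε j),
              walsh n A η • walshCoeff n f A := Finset.sum_comm
      _ = ∑ A : Finset (Fin n),
            (∑ η ∈ univ.filter (fun η : Fin n → Bool => ∀ j ∈ S, η j = ε j), walsh n A η)
              • walshCoeff n f A :=
          Finset.sum_congr rfl fun A _ => (Finset.sum_smul).symm
  rw [h1, Finset.smul_sum]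
  refine Finset.sum_congr rfl fun A _ => ?_
  rw [sum_walsh_filter, smul_smul]
  by_cases hAS : A ⊆ S
  · rw [if_pos hAS, if_pos hAS, ← mul_assoc,
      inv_mul_cancel₀ (by positivity : ((2:ℝ)^(n - S.card)) ≠ 0), one_mul]
  · rw [if_neg hAS, if_neg hAS, mul_zero, zero_smul]

lemma walsh_update_not (n : ℕ) (A : Finset (Fin n)) (j : Fin n) (ε : Fin n → Bool) :
    walsh n A (Function.update ε j (!(ε j))) = (if j ∈ A then (-1:ℝ) else 1) * walsh n A ε := by
  by_cases hj : j ∈ A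
  · rw [if_pos hj, walsh, walsh, ← Finset.mul_prod_erase _ _ hj, ← Finset.mul_prod_erase _ _ hj]
    have h1 : ∏ i ∈ A.erase j, sgn (Function.update ε j (!(ε j)) i)
        = ∏ i ∈ A.erase j, sgn (ε i) :=
      Finset.prod_congr rfl fun i hi => by
        rw [Function.update_of_ne (Finset.ne_of_mem_erase hi)]
    rw [h1, Function.update_self, sgn_not]
    ring
  · rw [if_neg hj, one_mul, walsh, walsh]
    exact Finset.prod_congr rfl fun i hi => by
      rw [Function.update_of_ne (by rintro rfl; exact hj hi)]

lemma walshCoeff_deriv (n : ℕ) (j : Fin n) (F : (Fin n → Bool) → X) (A : Finset (Fin n)) :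
    walshCoeff n (cubeDeriv n j F) A = if j ∈ A then walshCoeff n F A else 0 := by
  set u : (Fin n → Bool) → (Fin n → Bool) := fun ε => Function.update ε j (!(ε j)) with hu
  have hinv : Function.Involutive u := by
    intro ε
    funext i
    by_cases h : i = j
    · subst h; simp [hu]
    · simp [hu, Function.update_of_ne h]
  have reindex : ∑ ε : Fin n → Bool, walsh n A ε • F (u ε)
      = (if j ∈ A then (-1:ℝ) else 1) • ∑ ε : Fin n → Bool, walsh n A ε • F ε := by
    have h := Function.Bijective.sum_comp hinv.bijective
      (fun ε => walsh n A ε • F (u ε))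
    calc ∑ ε : Fin n → Bool, walsh n A ε • F (u ε)
        = ∑ ε : Fin n → Bool, walsh n A (u ε) • F (u (u ε)) := h.symm
      _ = ∑ ε : Fin n → Bool, ((if j ∈ A then (-1:ℝ) else 1) * walsh n A ε) • F ε := by
          refine Finset.sum_congr rfl fun ε _ => ?_
          rw [hinv ε, hu]
          rw [walsh_update_not]
      _ = (if j ∈ A then (-1:ℝ) else 1) • ∑ ε : Fin n → Bool, walsh n A ε • F ε := by
          rw [Finset.smul_sum]
          exact Finset.sum_congr rfl fun ε _ => (smul_smul _ _ _).symm
  have hexp : walshCoeff n (cubeDeriv n j F) A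
      = ((2:ℝ)^n)⁻¹ • ((2:ℝ)⁻¹ • ((∑ ε : Fin n → Bool, walsh n A ε • F ε)
          - ∑ ε : Fin n → Bool, walsh n A ε • F (u ε))) := by
    rw [walshCoeff]
    congr 1
    rw [smul_sub, Finset.smul_sum, Finset.smul_sum, ← Finset.sum_sub_distrib]
    refine Finset.sum_congr rfl fun ε _ => ?_
    rw [cubeDeriv, smul_comm, smul_sub, smul_sub]
  rw [hexp, reindex]
  by_cases hj : j ∈ A
  · rw [if_pos hj, if_pos hj, neg_one_smul, sub_neg_eq_add, ← two_smul ℝ,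
      smul_smul, smul_smul, walshCoeff]
    norm_num
    congr 1
    ring
  · rw [if_neg hj, if_neg hj, one_smul, sub_self, smul_zero, smul_zero]

lemma subset_image_firstIdx (n : ℕ) (π : Equiv.Perm (Fin n)) (i : Fin n)
    (A : Finset (Fin n)) :
    A ⊆ (firstIdx n ((i : ℕ) + 1)).image π ↔ ∀ a ∈ A, π⁻¹ a ≤ i := by
  constructor
  · intro h a ha
    obtain ⟨k, hk, hka⟩ := Finset.mem_image.mp (h ha)
    have hk' : (k : ℕ) < (i : ℕ) + 1 := (Finset.mem_filter.mp hk).2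
    have : π⁻¹ a = k := by rw [← hka]; exact π.symm_apply_apply k
    rw [this]
    exact Fin.le_def.mpr (Nat.lt_succ_iff.mp hk')
  · intro h a ha
    refine Finset.mem_image.mpr ⟨π⁻¹ a, ?_, π.apply_symm_apply a⟩
    refine Finset.mem_filter.mpr ⟨Finset.mem_univ _, ?_⟩
    exact Nat.lt_succ_iff.mpr (Fin.le_def.mp (h a ha))

lemma count_max (n : ℕ) (A : Finset (Fin n)) (j : Fin n) (hj : j ∈ A) :
    (univ.filter (fun π : Equiv.Perm (Fin n) => ∀ a ∈ A, π⁻¹ a ≤ π⁻¹ j)).card * A.card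
      = n.factorial := by
  classical
  set P : Fin n → Finset (Equiv.Perm (Fin n)) :=
    fun j' => univ.filter (fun π => ∀ a ∈ A, π⁻¹ a ≤ π⁻¹ j') with hP
  have hswapA : ∀ u v : Fin n, u ∈ A → v ∈ A → ∀ a ∈ A, Equiv.swap u v a ∈ A := by
    intro u v hu hv a ha
    rw [Equiv.swap_apply_def]
    split_ifs <;> assumption
  have hmem : ∀ u v : Fin n, u ∈ A → v ∈ A → ∀ π : Equiv.Perm (Fin n),
      π ∈ P u → Equiv.swap u v * π ∈ P v := by
    intro u v hu hv π hπ
    rw [hP] at hπ ⊢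
    rw [Finset.mem_filter] at hπ ⊢
    refine ⟨Finset.mem_univ _, fun a ha => ?_⟩
    rw [mul_inv_rev, Equiv.swap_inv, Equiv.Perm.mul_apply, Equiv.Perm.mul_apply,
      Equiv.swap_apply_right]
    exact hπ.2 _ (hswapA u v hu hv a ha)
  have hcard : ∀ j' ∈ A, (P j').card = (P j).card := by
    intro j' hj'
    refine Finset.card_bij' (fun π _ => Equiv.swap j' j * π) (fun π _ => Equiv.swap j j' * π)
      (fun π hπ => hmem j' j hj' hj π hπ) (fun π hπ => hmem j j' hj hj' π hπ)
      (fun π _ => ?_) (fun π _ => ?_)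
    · show Equiv.swap j j' * (Equiv.swap j' j * π) = π
      rw [← mul_assoc, Equiv.swap_comm j j', Equiv.swap_mul_self, one_mul]
    · show Equiv.swap j' j * (Equiv.swap j j' * π) = π
      rw [← mul_assoc, Equiv.swap_comm j' j, Equiv.swap_mul_self, one_mul]
  have hone : ∀ π : Equiv.Perm (Fin n),
      (A.filter (fun j' => ∀ a ∈ A, π⁻¹ a ≤ π⁻¹ j')).card = 1 := by
    intro π
    obtain ⟨b, hb, hmax⟩ := A.exists_max_image (fun a => π⁻¹ a) ⟨j, hj⟩
    rw [Finset.card_eq_one]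
    refine ⟨b, ?_⟩
    ext x
    simp only [Finset.mem_filter, Finset.mem_singleton]
    constructor
    · rintro ⟨hxA, hx⟩
      exact π⁻¹.injective (le_antisymm (hmax x hxA) (hx b hb))
    · rintro rfl
      exact ⟨hb, hmax⟩
  have hsum : ∑ j' ∈ A, (P j').card = n.factorial := by
    calc ∑ j' ∈ A, (P j').card
        = ∑ j' ∈ A, ∑ π : Equiv.Perm (Fin n), if (∀ a ∈ A, π⁻¹ a ≤ π⁻¹ j') then 1 else 0 := by
          refine Finset.sum_congr rfl fun j' _ => ?_
          rw [hP, Finset.card_filter]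
      _ = ∑ π : Equiv.Perm (Fin n), ∑ j' ∈ A, if (∀ a ∈ A, π⁻¹ a ≤ π⁻¹ j') then 1 else 0 :=
          Finset.sum_comm
      _ = ∑ π : Equiv.Perm (Fin n),
            (A.filter (fun j' => ∀ a ∈ A, π⁻¹ a ≤ π⁻¹ j')).card := by
          refine Finset.sum_congr rfl fun π _ => ?_
          rw [Finset.card_filter]
      _ = ∑ _π : Equiv.Perm (Fin n), 1 := Finset.sum_congr rfl fun π _ => hone π
      _ = n.factorial := by
          rw [Finset.sum_const, smul_eq_mul, mul_one, Finset.card_univ, Fintype.card_perm,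
            Fintype.card_fin]
  have hconst : ∑ j' ∈ A, (P j').card = A.card * (P j).card := by
    rw [Finset.sum_congr rfl hcard, Finset.sum_const, smul_eq_mul]
  rw [mul_comm, ← hconst, hsum]

theorem avg_perm_eq_invLapDeriv
    (X : Type*) [NormedAddCommGroup X] [NormedSpace ℝ X] [CompleteSpace X]
    (n : ℕ) (hn : 0 < n) (f : Fin n → (Fin n → Bool) → X) (ε : Fin n → Bool) :
    ((n.factorial : ℝ))⁻¹ •
        ∑ π : Equiv.Perm (Fin n), ∑ i : Fin n,
          Epi n π ((i : ℕ) + 1) (cubeDeriv n (π i) (f (π i))) ε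
      = ∑ i : Fin n, invLapDeriv n i (f i) ε := by
  classical
  have step1 : ∀ (π : Equiv.Perm (Fin n)) (i : Fin n),
      Epi n π ((i : ℕ) + 1) (cubeDeriv n (π i) (f (π i))) ε
        = ∑ A : Finset (Fin n),
            (if (π i ∈ A ∧ ∀ a ∈ A, π⁻¹ a ≤ i) then walsh n A ε else 0)
              • walshCoeff n (f (π i)) A := by
    intro π i
    rw [Epi, condExp_eq]
    refine Finset.sum_congr rfl fun A _ => ?_
    rw [walshCoeff_deriv]
    by_cases h1 : π i ∈ A <;> by_cases h2 : ∀ a ∈ A, π⁻¹ a ≤ i <;>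
      simp [h1, h2, subset_image_firstIdx]
  have step2 : ∀ π : Equiv.Perm (Fin n),
      ∑ i : Fin n, Epi n π ((i : ℕ) + 1) (cubeDeriv n (π i) (f (π i))) ε
        = ∑ j : Fin n, ∑ A : Finset (Fin n),
            (if (j ∈ A ∧ ∀ a ∈ A, π⁻¹ a ≤ π⁻¹ j) then walsh n A ε else 0)
              • walshCoeff n (f j) A := by
    intro π
    rw [← Equiv.sum_comp π (fun j => ∑ A : Finset (Fin n),
      (if (j ∈ A ∧ ∀ a ∈ A, π⁻¹ a ≤ π⁻¹ j) then walsh n A ε else 0) • walshCoeff n (f j) A)]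
    refine Finset.sum_congr rfl fun i _ => ?_
    rw [step1 π i]
    refine Finset.sum_congr rfl fun A _ => ?_
    rw [show π⁻¹ (π i) = i from π.symm_apply_apply i]
  have inner : ∀ (j : Fin n) (A : Finset (Fin n)),
      ∑ π : Equiv.Perm (Fin n),
          (if (j ∈ A ∧ ∀ a ∈ A, π⁻¹ a ≤ π⁻¹ j) then walsh n A ε else 0)
            • walshCoeff n (f j) A
        = (if j ∈ A then
            (((univ.filter (fun π : Equiv.Perm (Fin n) => ∀ a ∈ A, π⁻¹ a ≤ π⁻¹ j)).card : ℝ)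
              * walsh n A ε) else 0) • walshCoeff n (f j) A := by
    intro j A
    by_cases hj : j ∈ A
    · simp only [hj, true_and, if_pos]
      rw [← Finset.sum_smul]
      congr 1
      rw [← Finset.sum_filter, Finset.sum_const, nsmul_eq_mul]
    · simp [hj]
  calc ((n.factorial : ℝ))⁻¹ •
        ∑ π : Equiv.Perm (Fin n), ∑ i : Fin n,
          Epi n π ((i : ℕ) + 1) (cubeDeriv n (π i) (f (π i))) ε
      = ((n.factorial : ℝ))⁻¹ • ∑ π : Equiv.Perm (Fin n), ∑ j : Fin n,
          ∑ A : Finset (Fin n),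
            (if (j ∈ A ∧ ∀ a ∈ A, π⁻¹ a ≤ π⁻¹ j) then walsh n A ε else 0)
              • walshCoeff n (f j) A := by
        rw [Finset.sum_congr rfl fun π _ => step2 π]
    _ = ((n.factorial : ℝ))⁻¹ • ∑ j : Fin n, ∑ A : Finset (Fin n),
          ∑ π : Equiv.Perm (Fin n),
            (if (j ∈ A ∧ ∀ a ∈ A, π⁻¹ a ≤ π⁻¹ j) then walsh n A ε else 0)
              • walshCoeff n (f j) A := by
        rw [Finset.sum_comm]
        congr 1
        exact Finset.sum_congr rfl fun j _ => Finset.sum_comm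
    _ = ∑ j : Fin n, ∑ A : Finset (Fin n), ((n.factorial : ℝ))⁻¹ •
          ((if j ∈ A then
            (((univ.filter (fun π : Equiv.Perm (Fin n) => ∀ a ∈ A, π⁻¹ a ≤ π⁻¹ j)).card : ℝ)
              * walsh n A ε) else 0) • walshCoeff n (f j) A) := by
        rw [Finset.smul_sum]
        refine Finset.sum_congr rfl fun j _ => ?_
        rw [Finset.smul_sum]
        exact Finset.sum_congr rfl fun A _ => by rw [inner]
    _ = ∑ j : Fin n, invLapDeriv n j (f j) ε := by
        refine Finset.sum_congr rfl fun j _ => ?_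
        rw [invLapDeriv, Finset.sum_filter]
        refine Finset.sum_congr rfl fun A _ => ?_
        by_cases hj : j ∈ A
        · rw [if_pos hj, if_pos hj, smul_smul]
          congr 1
          have hA0 : (A.card : ℝ) ≠ 0 := Nat.cast_ne_zero.mpr (Finset.card_ne_zero_of_mem hj)
          have hn0 : (n.factorial : ℝ) ≠ 0 := Nat.cast_ne_zero.mpr (Nat.factorial_ne_zero n)
          set c : ℝ := ((univ.filter
              (fun π : Equiv.Perm (Fin n) => ∀ a ∈ A, π⁻¹ a ≤ π⁻¹ j)).card : ℝ) with hcdef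
          have hcR : c * (A.card : ℝ) = (n.factorial : ℝ) := by
            rw [hcdef, ← Nat.cast_mul, count_max n A j hj]
          field_simp
          linear_combination walsh n A ε * hcR
        · rw [if_neg hj, if_neg hj]
          simp
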